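/- Consider the fourth order semi-discrete dispersion relation (1/6) s³ + s = K/2 where s = sin(k h/2). As a cubic in s it has exactly one real root for real K, and the corresponding physical wavenumber admits the expansion k_FD4 = k_ex (1 + (3/640)K⁴ − (1/3584)K⁶ + O(K⁸)) as K → 0, where K = k_ex h. -/

import Mathlib

set_option maxHeartbeats 1000000
open Real Filter Asymptotics Topology

noncomputable def fdP (t : ℝ) : ℝ :=
  (t ^ 3 / 3 + 2 * t) + 3 / 640 * (t ^ 3 / 3 + 2 * t) ^ 5 - 1 / 3584 * (t ^ 3 / 3 + 2 * t) ^ 7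

noncomputable def fdPd (t : ℝ) : ℝ :=
  (t ^ 2 + 2) + 3 / 640 * (5 * (t ^ 3 / 3 + 2 * t) ^ 4 * (t ^ 2 + 2))
    - 1 / 3584 * (7 * (t ^ 3 / 3 + 2 * t) ^ 6 * (t ^ 2 + 2))

lemma fd_hasDerivAt {t : ℝ} (h1 : t ≠ -1) (h2 : t ≠ 1) :
    HasDerivAt (fun u => 2 * Real.arcsin u - fdP u)
      (2 * (1 / Real.sqrt (1 - t ^ 2)) - fdPd t) t := by
  have hK : HasDerivAt (fun u : ℝ => u ^ 3 / 3 + 2 * u) (t ^ 2 + 2) t := by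
    have h := ((hasDerivAt_pow 3 t).div_const 3).add ((hasDerivAt_id t).const_mul 2)
    have hv : (↑3 * t ^ (3 - 1) / 3 + 2 * 1 : ℝ) = t ^ 2 + 2 := by push_cast; ring
    exact h.congr_deriv (by push_cast; ring)
  have hP := (hK.add ((hK.pow 5).const_mul (3 / 640))).sub ((hK.pow 7).const_mul (1 / 3584))
  have hv2 : fdPd t = (t ^ 2 + 2) + 3 / 640 * (↑5 * (t ^ 3 / 3 + 2 * t) ^ (5 - 1) * (t ^ 2 + 2))
      - 1 / 3584 * (↑7 * (t ^ 3 / 3 + 2 * t) ^ (7 - 1) * (t ^ 2 + 2)) := by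
    unfold fdPd; push_cast; ring
  rw [hv2]
  exact ((Real.hasDerivAt_arcsin h1 h2).const_mul 2).sub hP

lemma fd_deriv_bound {t : ℝ} (ht : |t| ≤ 1 / 2) :
    |2 * (1 / Real.sqrt (1 - t ^ 2)) - fdPd t| ≤ 3 * t ^ 8 := by
  have habs := abs_le.mp ht
  have ht2 : t ^ 2 ≤ 1 / 4 := by nlinarith [habs.1, habs.2]
  have hp2 := pow_le_pow_left₀ (sq_nonneg t) ht2 2
  have hp3 := pow_le_pow_left₀ (sq_nonneg t) ht2 3
  have hp4 := pow_le_pow_left₀ (sq_nonneg t) ht2 4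
  have hp5 := pow_le_pow_left₀ (sq_nonneg t) ht2 5
  have hp6 := pow_le_pow_left₀ (sq_nonneg t) ht2 6
  have ht8 : (0:ℝ) ≤ t ^ 8 := by positivity
  obtain ⟨r, hrdef⟩ : ∃ r, r = Real.sqrt (1 - t ^ 2) := ⟨_, rfl⟩
  rw [← hrdef]
  have hr2 : r ^ 2 = 1 - t ^ 2 := by rw [hrdef]; exact Real.sq_sqrt (by nlinarith)
  have hrnn : 0 ≤ r := hrdef ▸ Real.sqrt_nonneg _
  have hr : 4 / 5 ≤ r := by nlinarith
  have hrpos : 0 < r := by linarith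
  obtain ⟨A, hAdef⟩ : ∃ A : ℝ, A = 1 + t ^ 2 / 2 + 3 / 8 * t ^ 4 + 5 / 16 * t ^ 6 := ⟨_, rfl⟩
  have hA1 : 1 ≤ A := by rw [hAdef]; nlinarith [sq_nonneg t]
  have hden : 1 ≤ 1 + A * r := by nlinarith
  have hQ2 : |(35:ℝ) / 64 + 7 / 32 * t ^ 2 + 35 / 256 * t ^ 4 + 25 / 256 * t ^ 6| ≤ 1 := by
    rw [abs_of_nonneg (by positivity)]; nlinarith [sq_nonneg t]
  have hid : (1 - A * r) * (1 + A * r) =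
      t ^ 8 * (35 / 64 + 7 / 32 * t ^ 2 + 35 / 256 * t ^ 4 + 25 / 256 * t ^ 6) := by
    have h0 : (1 - A * r) * (1 + A * r) = 1 - A ^ 2 * r ^ 2 := by ring
    rw [h0, hr2, hAdef]; ring
  have h5 : |1 - A * r| ≤ t ^ 8 := by
    have := calc |1 - A * r| ≤ |1 - A * r| * (1 + A * r) :=
          le_mul_of_one_le_right (abs_nonneg _) hden
      _ = |(1 - A * r) * (1 + A * r)| := by
          rw [abs_mul, abs_of_nonneg (by linarith : (0:ℝ) ≤ 1 + A * r)]
      _ = t ^ 8 * |35 / 64 + 7 / 32 * t ^ 2 + 35 / 256 * t ^ 4 + 25 / 256 * t ^ 6| := by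
          rw [hid, abs_mul, abs_of_nonneg ht8]
      _ ≤ t ^ 8 * 1 := mul_le_mul_of_nonneg_left hQ2 ht8
    linarith
  have h6 : |2 * (1 / r) - 2 * A| ≤ 5 / 2 * t ^ 8 := by
    have he : 2 * (1 / r) - 2 * A = 2 * (1 - A * r) / r := by field_simp
    rw [he, abs_div, abs_of_pos hrpos, div_le_iff₀ hrpos, abs_mul, abs_two]
    nlinarith [h5, abs_nonneg (1 - A * r)]
  have h7 : |2 * A - fdPd t| ≤ 1 / 2 * t ^ 8 := by
    have he : 2 * A - fdPd t = t ^ 8 * (11 / 72 * t ^ 2 + 13 / 192 * t ^ 4 + 49 / 3456 * t ^ 6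
        + 17 / 10368 * t ^ 8 + 19 / 186624 * t ^ 10 + 1 / 373248 * t ^ 12) := by
      rw [hAdef]; unfold fdPd; ring
    rw [he, abs_mul, abs_of_nonneg ht8, abs_of_nonneg (by positivity)]
    nlinarith [sq_nonneg t]
  calc |2 * (1 / r) - fdPd t|
      = |(2 * (1 / r) - 2 * A) + (2 * A - fdPd t)| := by rw [sub_add_sub_cancel]
    _ ≤ |2 * (1 / r) - 2 * A| + |2 * A - fdPd t| := abs_add_le _ _
    _ ≤ 5 / 2 * t ^ 8 + 1 / 2 * t ^ 8 := add_le_add h6 h7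
    _ = 3 * t ^ 8 := by ring

lemma fd_key {c : ℝ} (hc : |c| ≤ 1 / 2) :
    |2 * Real.arcsin c - fdP c| ≤ 3 * |c| ^ 9 := by
  have hmem : ∀ t ∈ Set.uIcc (0:ℝ) c, |t| ≤ |c| := by
    intro t ht
    rcases le_total 0 c with h | h
    · rw [Set.uIcc_of_le h] at ht
      rw [abs_of_nonneg ht.1, abs_of_nonneg h]; exact ht.2
    · rw [Set.uIcc_of_ge h] at ht
      rw [abs_of_nonpos ht.2, abs_of_nonpos h]; linarith [ht.1]
  have hbound : ∀ t ∈ Set.uIcc (0:ℝ) c,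
      ‖2 * (1 / Real.sqrt (1 - t ^ 2)) - fdPd t‖ ≤ 3 * |c| ^ 8 := by
    intro t ht
    have h1 : |t| ≤ |c| := hmem t ht
    have h2 : |t| ≤ 1 / 2 := h1.trans hc
    calc ‖2 * (1 / Real.sqrt (1 - t ^ 2)) - fdPd t‖ ≤ 3 * t ^ 8 := fd_deriv_bound h2
      _ = 3 * |t| ^ 8 := by rw [← abs_pow, abs_of_nonneg (by positivity : (0:ℝ) ≤ t ^ 8)]
      _ ≤ 3 * |c| ^ 8 := by gcongr
  have hderiv : ∀ t ∈ Set.uIcc (0:ℝ) c,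
      HasDerivWithinAt (fun u => 2 * Real.arcsin u - fdP u)
        (2 * (1 / Real.sqrt (1 - t ^ 2)) - fdPd t) (Set.uIcc (0:ℝ) c) t := by
    intro t ht
    have h2 : |t| ≤ 1 / 2 := (hmem t ht).trans hc
    have habs := abs_le.mp h2
    exact (fd_hasDerivAt (by linarith : t ≠ -1) (by linarith : t ≠ 1)).hasDerivWithinAt
  have := Convex.norm_image_sub_le_of_norm_hasDerivWithin_le hderiv hbound
    (convex_uIcc 0 c) Set.left_mem_uIcc Set.right_mem_uIcc
  simp only [Real.norm_eq_abs] at this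
  have h0 : 2 * Real.arcsin 0 - fdP 0 = 0 := by simp [fdP]
  calc |2 * Real.arcsin c - fdP c|
      = |(2 * Real.arcsin c - fdP c) - (2 * Real.arcsin 0 - fdP 0)| := by rw [h0, sub_zero]
    _ ≤ 3 * |c| ^ 8 * |c - 0| := this
    _ = 3 * |c| ^ 9 := by rw [sub_zero]; ring

/-- The FD4 dispersion relation `s³/6 + s = K/2` (with `s = sin(k h/2)`) has
exactly one real root `s` for each real `K`, and the corresponding physical
wavenumber `k_FD4 = (2/h) arcsin(s(K))` satisfies
`k_FD4 = k_ex (1 + (3/640)K⁴ − (1/3584)K⁶ + O(K⁸))` as `K → 0`, `K = k_ex h`. -/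
theorem fd4_dispersion_expansion :
    (∀ K : ℝ, ∃! s : ℝ, s ^ 3 / 6 + s = K / 2) ∧
    ∀ s : ℝ → ℝ, (∀ K : ℝ, s K ^ 3 / 6 + s K = K / 2) →
      ∀ h : ℝ, 0 < h →
        (fun K : ℝ => (2 / h) * Real.arcsin (s K) -
            (K / h) * (1 + (3 / 640) * K ^ 4 - (1 / 3584) * K ^ 6))
          =O[nhds 0] fun K : ℝ => K ^ 9 := by
  constructor
  · intro K
    have hc : Continuous fun s : ℝ => s ^ 3 / 6 + s := by fun_prop
    have hK := abs_nonneg K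
    have hK2 := le_abs_self K
    have hK3 := neg_abs_le K
    have hp : (0:ℝ) ≤ |K| ^ 3 := pow_nonneg hK 3
    have he : (-|K|) ^ 3 = -(|K| ^ 3) := by ring
    have h1 : (-|K|) ^ 3 / 6 + (-|K|) ≤ K / 2 := by rw [he]; linarith
    have h2 : K / 2 ≤ |K| ^ 3 / 6 + |K| := by linarith
    obtain ⟨s, _, hs⟩ := intermediate_value_Icc (by linarith : -|K| ≤ |K|) hc.continuousOn ⟨h1, h2⟩
    refine ⟨s, hs, fun y hy => ?_⟩
    have hmono : StrictMono fun s : ℝ => s ^ 3 / 6 + s :=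
      ((Odd.strictMono_pow (by decide : Odd 3)).div_const (by norm_num)).add strictMono_id
    exact hmono.injective (hy.trans hs.symm)
  · intro s hs h hh
    rw [Asymptotics.isBigO_iff]
    refine ⟨3 / (512 * h), ?_⟩
    have hev : ∀ᶠ K : ℝ in 𝓝 0, |K| ≤ 1 := by
      have : Set.Icc (-1 : ℝ) 1 ∈ 𝓝 (0:ℝ) := Icc_mem_nhds (by norm_num) (by norm_num)
      filter_upwards [this] with K hK
      exact abs_le.mpr ⟨hK.1, hK.2⟩
    filter_upwards [hev] with K hK1
    set c := s K with hcdef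
    have heq : K = c ^ 3 / 3 + 2 * c := by have := hs K; linarith
    have habs : |c| ≤ |K| / 2 := by
      have h1 : |K| / 2 = |c| * (c ^ 2 / 6 + 1) := by
        have : |K| / 2 = |K / 2| := by rw [abs_div]; norm_num
        rw [this, ← hs K, show c ^ 3 / 6 + c = c * (c ^ 2 / 6 + 1) by ring, abs_mul,
          abs_of_pos (by positivity : (0:ℝ) < c ^ 2 / 6 + 1)]
      nlinarith [abs_nonneg c, sq_nonneg c]
    have hc2 : |c| ≤ 1 / 2 := by linarith
    have hrw : (2 / h) * Real.arcsin c -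
        (K / h) * (1 + (3 / 640) * K ^ 4 - (1 / 3584) * K ^ 6)
        = (1 / h) * (2 * Real.arcsin c - fdP c) := by
      rw [heq]; unfold fdP; field_simp
    rw [hrw]
    have hkey := fd_key hc2
    have h9 : |c| ^ 9 ≤ (|K| / 2) ^ 9 := pow_le_pow_left₀ (abs_nonneg c) habs 9
    have hnorm : ‖(1 / h) * (2 * Real.arcsin c - fdP c)‖
        = (1 / h) * |2 * Real.arcsin c - fdP c| := by
      rw [norm_mul, Real.norm_eq_abs, Real.norm_eq_abs, abs_of_pos (by positivity)]
    rw [hnorm]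
    have hKn : ‖K ^ 9‖ = |K| ^ 9 := by rw [Real.norm_eq_abs, abs_pow]
    rw [hKn]
    have : (1 / h) * |2 * Real.arcsin c - fdP c| ≤ (1 / h) * (3 * (|K| / 2) ^ 9) := by
      gcongr
      exact hkey.trans (by nlinarith [pow_nonneg (abs_nonneg c) 9])
    calc (1 / h) * |2 * Real.arcsin c - fdP c| ≤ (1 / h) * (3 * (|K| / 2) ^ 9) := this
      _ = 3 / (512 * h) * |K| ^ 9 := by ring
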